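/- Let n ≥ 3 be an integer, r₀ > 0, r₊ > 0, λ > 0, G > 0, and set r̄₀ := (r₊/n)·(n − 1 + r₀ⁿ/r₊ⁿ). Define E_HH(g) := −λr₀ⁿ/(4G·r₊·(n − 1 + r₀ⁿ/r₊ⁿ)) and E_HH(g_HM) := −λr̄₀^{n−1}/(4G·n). Then the identity E_HH(g) = ( n·(r₀/r₊) / (n − 1 + (r₀/r₊)ⁿ) )ⁿ · E_HH(g_HM) holds, and consequently E_HH(g) ≥ E_HH(g_HM), with equality if and only if r₊ = r₀. -/

import Mathlib

/-- Strict Bernoulli: for `x > 0`, `x ≠ 1`, `2 ≤ n`, we have `n*x < (n-1) + x^n`. -/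
lemma strict_bernoulli (x : ℝ) (hx : 0 < x) (hx1 : x ≠ 1) :
    ∀ n : ℕ, 2 ≤ n → (n : ℝ) * x < (n : ℝ) - 1 + x ^ n := by
  intro n hn
  induction n with
  | zero => omega
  | succ m ih =>
    rcases Nat.lt_or_ge m 2 with hm | hm
    · interval_cases m
      · omega
      · push_cast
        nlinarith [sq_nonneg (x - 1), sq_pos_of_ne_zero (sub_ne_zero.mpr hx1)]
    · have h := ih hm
      have hsign : (x - 1) * (x ^ m - 1) ≥ 0 := by
        rcases le_or_gt 1 x with h1 | h1
        · exact mul_nonneg (by linarith) (by nlinarith [one_le_pow₀ h1 (n := m)])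
        · have hp : x ^ m ≤ 1 := pow_le_one₀ hx.le h1.le
          nlinarith
      push_cast
      push_cast at h
      nlinarith [pow_pos hx m, pow_succ x m]

/-- positive energy comparison: with r̄₀ = (r₊/n)(n − 1 + r₀ⁿ/r₊ⁿ),
E_HH(g) = −λr₀ⁿ/(4Gr₊(n−1+r₀ⁿ/r₊ⁿ)) and E_HH(g_HM) = −λr̄₀^{n−1}/(4Gn) satisfy
E_HH(g) = (n(r₀/r₊)/(n−1+(r₀/r₊)ⁿ))ⁿ · E_HH(g_HM) and E_HH(g) ≥ E_HH(g_HM),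
with equality iff r₊ = r₀. -/
theorem stmt_19 (n : ℕ) (hn : 3 ≤ n) (r₀ rp lam G : ℝ)
    (hr₀ : 0 < r₀) (hrp : 0 < rp) (hlam : 0 < lam) (hG : 0 < G)
    (rbar : ℝ) (hrbar : rbar = rp / n * ((n : ℝ) - 1 + r₀ ^ n / rp ^ n))
    (EHHg EHHhm : ℝ)
    (hEHHg : EHHg = -(lam * r₀ ^ n) / (4 * G * rp * ((n : ℝ) - 1 + r₀ ^ n / rp ^ n)))
    (hEHHhm : EHHhm = -(lam * rbar ^ (n - 1)) / (4 * G * n)) :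
    EHHg = ((n : ℝ) * (r₀ / rp) / ((n : ℝ) - 1 + (r₀ / rp) ^ n)) ^ n * EHHhm ∧
    EHHg ≥ EHHhm ∧
    (EHHg = EHHhm ↔ rp = r₀) := by
  obtain ⟨m, rfl⟩ : ∃ m, n = m + 1 := ⟨n - 1, by omega⟩
  obtain ⟨x, hxdef⟩ : ∃ x : ℝ, x = r₀ / rp := ⟨_, rfl⟩
  have hx : 0 < x := hxdef ▸ div_pos hr₀ hrp
  have hnR : (2 : ℝ) ≤ (m : ℝ) := by exact_mod_cast (by omega : (2:ℕ) ≤ m)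
  have hxn : r₀ ^ (m + 1) / rp ^ (m + 1) = x ^ (m + 1) := by rw [hxdef, div_pow]
  obtain ⟨D, hDdef⟩ : ∃ D : ℝ, D = ((m : ℝ) + 1) - 1 + x ^ (m + 1) := ⟨_, rfl⟩
  have hD : 0 < D := by rw [hDdef]; nlinarith [pow_pos hx (m + 1)]
  have hDne : D ≠ 0 := ne_of_gt hD
  have hDeq : ((m + 1 : ℕ) : ℝ) - 1 + r₀ ^ (m + 1) / rp ^ (m + 1) = D := by
    rw [hxn, hDdef]; push_cast; ring
  rw [hDeq] at hrbar hEHHg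
  have hnne : ((m : ℝ) + 1) ≠ 0 := by positivity
  have hrbar' : rbar = rp * D / ((m : ℝ) + 1) := by rw [hrbar]; push_cast; ring
  have hrbarpos : 0 < rbar := by rw [hrbar']; positivity
  have hhmneg : EHHhm < 0 := by
    rw [hEHHhm]
    apply div_neg_of_neg_of_pos
    · simp only [neg_lt_zero]
      exact mul_pos hlam (pow_pos hrbarpos _)
    · push_cast; positivity
  -- Bernoulli: (m+1)*x ≤ D, strict iff x ≠ 1
  have hbern : ((m : ℝ) + 1) * x ≤ D := by
    have := one_add_mul_sub_le_pow (a := x) (by linarith) (m + 1)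
    push_cast at this
    rw [hDdef]; nlinarith
  obtain ⟨c, hcdef⟩ : ∃ c : ℝ, c = ((m : ℝ) + 1) * x / D := ⟨_, rfl⟩
  have hc0 : 0 < c := by rw [hcdef]; positivity
  have hc1 : c ≤ 1 := by rw [hcdef, div_le_one hD]; exact hbern
  -- the identity
  have hid : EHHg = c ^ (m + 1) * EHHhm := by
    have e1 : rbar ^ (m + 1 - 1) = rp ^ m * D ^ m / ((m : ℝ) + 1) ^ m := by
      simp only [Nat.add_sub_cancel]
      rw [hrbar', div_pow, mul_pow]
    have e2 : c ^ (m + 1) = ((m : ℝ) + 1) ^ (m + 1) * (r₀ ^ (m + 1) / rp ^ (m + 1)) / D ^ (m + 1) := by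
      rw [hcdef, hxdef, div_pow, mul_pow, div_pow]
    rw [hEHHg, hEHHhm, e1, e2]
    push_cast
    field_simp
    ring
  have hkey : c ^ (m + 1) ≤ 1 := pow_le_one₀ hc0.le hc1
  have hIneq : EHHg ≥ EHHhm := by rw [hid]; nlinarith
  refine ⟨?_, hIneq, ?_⟩
  · have hceq : ((m + 1 : ℕ) : ℝ) * (r₀ / rp) / (((m + 1 : ℕ) : ℝ) - 1 + (r₀ / rp) ^ (m + 1)) = c := by
      rw [hcdef, hDdef, hxdef]; push_cast; ring
    rw [hceq]; exact hid
  constructor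
  · intro heq
    by_contra hne
    have hxne : x ≠ 1 := by
      rw [hxdef]
      intro h
      exact hne (by field_simp at h; linarith)
    have hsb := strict_bernoulli x hx hxne (m + 1) (by omega)
    push_cast at hsb
    have hclt : c < 1 := by
      rw [hcdef, div_lt_one hD, hDdef]; push_cast; linarith
    have : c ^ (m + 1) < 1 := pow_lt_one₀ hc0.le hclt (by omega)
    rw [hid] at heq
    nlinarith
  · intro h
    subst h
    have hx1 : x = 1 := by rw [hxdef]; field_simp
    have hc : c = 1 := by rw [hcdef, hDdef, hx1]; field_simp; ring
    rw [hid, hc, one_pow, one_mul]
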